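/- Periodic weight bound for Steklov smoothing: if Φ is a Γ-periodic function on ℝ^d with Φ ∈ L₂(Ω), then the operator [Φ^ε] S_ε of multiplication by Φ(x/ε) composed with the Steklov smoothing is bounded on L₂(ℝ^d;ℂⁿ) with ‖[Φ^ε] S_ε‖ ≤ |Ω|^{-1/2} ‖Φ‖_{L₂(Ω)} for all ε > 0. -/

import Mathlib

open MeasureTheory

open Set
open scoped ENNReal NNReal


lemma cs_sq {α : Type*} [MeasurableSpace α] (μ : Measure α) (g : α → ℝ≥0∞)
    (hg : AEMeasurable g μ) :
    (∫⁻ a, g a ∂μ) ^ 2 ≤ μ univ * ∫⁻ a, g a ^ 2 ∂μ := by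
  have hpq : Real.HolderConjugate 2 2 := Real.HolderConjugate.two_two
  have h := ENNReal.lintegral_mul_le_Lp_mul_Lq μ hpq
    (aemeasurable_const : AEMeasurable (fun _ => (1 : ℝ≥0∞)) μ) hg
  simp only [Pi.mul_apply, one_mul, ENNReal.one_rpow, lintegral_const, mul_one] at h
  have h2 := pow_le_pow_left' h 2
  refine h2.trans_eq ?_
  rw [mul_pow, ← ENNReal.rpow_natCast (μ univ ^ _) 2,
    ← ENNReal.rpow_natCast ((∫⁻ a, _ ∂μ) ^ _) 2, ← ENNReal.rpow_mul, ← ENNReal.rpow_mul]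
  norm_num


variable {d : ℕ}

lemma quasiT (Ω : Set (EuclideanSpace ℝ (Fin d))) {ε : ℝ} (hε : ε ≠ 0) :
    Measure.QuasiMeasurePreserving
      (fun p : EuclideanSpace ℝ (Fin d) × EuclideanSpace ℝ (Fin d) => p.1 - ε • p.2)
      (volume.prod (volume.restrict Ω)) volume := by
  have hT : Measurable (fun p : EuclideanSpace ℝ (Fin d) × EuclideanSpace ℝ (Fin d) =>
      p.1 - ε • p.2) := measurable_fst.sub (measurable_snd.const_smul ε)
  refine ⟨hT, Measure.AbsolutelyContinuous.mk fun s hs h0 => ?_⟩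
  rw [Measure.map_apply hT hs, Measure.prod_apply (hT hs)]
  have : ∀ x : EuclideanSpace ℝ (Fin d),
      (volume.restrict Ω) (Prod.mk x ⁻¹' ((fun p : EuclideanSpace ℝ (Fin d) ×
        EuclideanSpace ℝ (Fin d) => p.1 - ε • p.2) ⁻¹' s)) = 0 := by
    intro x
    refine le_antisymm (le_trans (Measure.restrict_le_self _) (le_of_eq ?_)) zero_le
    have hset : (Prod.mk x ⁻¹' ((fun p : EuclideanSpace ℝ (Fin d) ×
        EuclideanSpace ℝ (Fin d) => p.1 - ε • p.2) ⁻¹' s))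
        = (fun z : EuclideanSpace ℝ (Fin d) => (-ε) • z) ⁻¹'
          ((fun w => x + w) ⁻¹' s) := by
      ext z; simp [sub_eq_add_neg, neg_smul]
    rw [hset, Measure.addHaar_preimage_smul volume (neg_ne_zero.2 hε),
      measure_preimage_add volume x s, h0, mul_zero]
  simp [this]

lemma fund_translate {L : Submodule ℤ (EuclideanSpace ℝ (Fin d))}
    {Ω : Set (EuclideanSpace ℝ (Fin d))}
    (hfund : IsAddFundamentalDomain L.toAddSubgroup Ω volume)
    (y : EuclideanSpace ℝ (Fin d)) :
    IsAddFundamentalDomain L.toAddSubgroup ((fun z => y + z) '' Ω) volume := by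
  refine hfund.image_of_equiv (Equiv.addLeft y)
    ?_ (Equiv.refl _) ?_
  · have : ⇑(Equiv.addLeft y).symm = fun x => -y + x := by
      ext x; simp [Equiv.addLeft]
    rw [this]
    exact (measurePreserving_add_left volume (-y)).quasiMeasurePreserving
  · intro γ x
    show y + (γ +ᵥ x) = γ +ᵥ (y + x)
    have : ∀ w, γ +ᵥ w = (γ : EuclideanSpace ℝ (Fin d)) + w := fun w => rfl
    rw [this, this]
    abel

lemma periodic_setLIntegral {L : Submodule ℤ (EuclideanSpace ℝ (Fin d))}
    [Countable L.toAddSubgroup]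
    {Ω : Set (EuclideanSpace ℝ (Fin d))}
    (hfund : IsAddFundamentalDomain L.toAddSubgroup Ω volume)
    (G : EuclideanSpace ℝ (Fin d) → ℝ≥0∞)
    (hG : ∀ γ ∈ L, ∀ x, G (x + γ) = G x) (y : EuclideanSpace ℝ (Fin d)) :
    ∫⁻ z in Ω, G (y + z) = ∫⁻ z in Ω, G z := by
  have h1 : ∫⁻ z in Ω, G (y + z) = ∫⁻ w in (fun z => y + z) '' Ω, G w :=
    (measurePreserving_add_left volume y).setLIntegral_comp_emb
      (MeasurableEquiv.addLeft y).measurableEmbedding G Ω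
  rw [h1]
  refine (fund_translate hfund y).setLIntegral_eq hfund G fun γ x => ?_
  show G ((γ : EuclideanSpace ℝ (Fin d)) + x) = G x
  rw [add_comm]
  exact hG γ γ.2 x

/-- The Steklov smoothing operator `(S_ε u)(x) = |Ω|^{-1} ∫_Ω u(x − εz) dz`. -/
noncomputable def steklov {d n : ℕ} (Ω : Set (EuclideanSpace ℝ (Fin d))) (ε : ℝ)
    (u : EuclideanSpace ℝ (Fin d) → EuclideanSpace ℂ (Fin n))
    (x : EuclideanSpace ℝ (Fin d)) : EuclideanSpace ℂ (Fin n) :=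
  ((volume Ω).toReal)⁻¹ • ∫ z in Ω, u (x - ε • z)

/-- **periodic weight bound for Steklov smoothing.** If `Φ` is a
Γ-periodic function with `Φ ∈ L₂(Ω)` (`Ω` a fundamental cell of the lattice `Γ`), then
the operator `[Φ^ε] S_ε` — multiplication by `Φ(x/ε)` composed with the Steklov
smoothing — is bounded on `L₂(ℝ^d;ℂⁿ)` with
`‖[Φ^ε] S_ε u‖_{L₂} ≤ |Ω|^{-1/2} ‖Φ‖_{L₂(Ω)} ‖u‖_{L₂}` for all `ε > 0`. -/
theorem mul_periodic_steklov_L2_bound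
    {d n : ℕ} (B : Module.Basis (Fin d) ℝ (EuclideanSpace ℝ (Fin d)))
    (L : Submodule ℤ (EuclideanSpace ℝ (Fin d)))
    (hL : L = Submodule.span ℤ (Set.range ⇑B))
    (Ω : Set (EuclideanSpace ℝ (Fin d)))
    (hfund : IsAddFundamentalDomain L.toAddSubgroup Ω volume)
    (hvol0 : volume Ω ≠ 0) (hvoltop : volume Ω ≠ ⊤)
    (Φ : EuclideanSpace ℝ (Fin d) → ℂ)
    (hΦmeas : Measurable Φ)
    (hΦper : ∀ γ ∈ L, ∀ x, Φ (x + γ) = Φ x)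
    (hΦL2 : Integrable (fun x => ‖Φ x‖ ^ 2) (volume.restrict Ω))
    (ε : ℝ) (hε : 0 < ε)
    (u : EuclideanSpace ℝ (Fin d) → EuclideanSpace ℂ (Fin n))
    (humeas : AEStronglyMeasurable u volume)
    (hu2 : Integrable (fun x => ‖u x‖ ^ 2)) :
    Real.sqrt (∫ x, ‖Φ (ε⁻¹ • x) • steklov Ω ε u x‖ ^ 2)
      ≤ (Real.sqrt ((volume Ω).toReal))⁻¹ * Real.sqrt (∫ x in Ω, ‖Φ x‖ ^ 2) *
          Real.sqrt (∫ x, ‖u x‖ ^ 2) := by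
  haveI hcount : Countable L.toAddSubgroup := by
    subst hL; exact inferInstanceAs (Countable (Submodule.span ℤ (Set.range ⇑B)))
  -- abbreviations
  have hGmeas : Measurable (fun w : EuclideanSpace ℝ (Fin d) => (‖Φ w‖₊ : ℝ≥0∞) ^ 2) :=
    (hΦmeas.nnnorm.coe_nnreal_ennreal).pow_const 2
  have hUae : AEMeasurable (fun w : EuclideanSpace ℝ (Fin d) => (‖u w‖₊ : ℝ≥0∞) ^ 2) volume :=
    humeas.aemeasurable.nnnorm.coe_nnreal_ennreal.pow_const 2
  have hqT := quasiT Ω hε.ne'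
  have hWae : AEMeasurable
      (fun p : EuclideanSpace ℝ (Fin d) × EuclideanSpace ℝ (Fin d) =>
        (‖u (p.1 - ε • p.2)‖₊ : ℝ≥0∞)) (volume.prod (volume.restrict Ω)) :=
    humeas.aemeasurable.nnnorm.coe_nnreal_ennreal.comp_quasiMeasurePreserving hqT
  set IΦ := ∫⁻ z in Ω, (‖Φ z‖₊ : ℝ≥0∞) ^ 2 with hIΦdef
  set IU := ∫⁻ x, (‖u x‖₊ : ℝ≥0∞) ^ 2 with hIUdef
  have hIΦ_ne : IΦ ≠ ⊤ := by
    have h := hΦL2.hasFiniteIntegral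
    rw [HasFiniteIntegral] at h
    refine ne_of_lt (lt_of_le_of_lt (le_of_eq ?_) h)
    refine lintegral_congr fun x => ?_
    simp only [enorm_eq_nnnorm, nnnorm_pow, nnnorm_norm, ENNReal.coe_pow]
  have hIU_ne : IU ≠ ⊤ := by
    have h := hu2.hasFiniteIntegral
    rw [HasFiniteIntegral] at h
    refine ne_of_lt (lt_of_le_of_lt (le_of_eq ?_) h)
    refine lintegral_congr fun x => ?_
    simp only [enorm_eq_nnnorm, nnnorm_pow, nnnorm_norm, ENNReal.coe_pow]
  have hμinv_ne : (volume Ω)⁻¹ ≠ ⊤ := by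
    simpa [ENNReal.inv_eq_top] using hvol0
  -- a.e. measurability of slices
  have hcur : ∀ᵐ x : EuclideanSpace ℝ (Fin d),
      AEMeasurable (fun z => (‖u (x - ε • z)‖₊ : ℝ≥0∞)) (volume.restrict Ω) := by
    obtain ⟨g, hgmeas, hWg⟩ := hWae
    filter_upwards [Measure.ae_ae_of_ae_prod hWg] with x hx
    exact ⟨fun z => g (x, z), hgmeas.comp measurable_prodMk_left, hx⟩
  -- pointwise bound
  have hpt : ∀ᵐ x : EuclideanSpace ℝ (Fin d),
      ENNReal.ofReal (‖Φ (ε⁻¹ • x) • steklov Ω ε u x‖ ^ 2)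
        ≤ (‖Φ (ε⁻¹ • x)‖₊ : ℝ≥0∞) ^ 2 *
          ((volume Ω)⁻¹ * ∫⁻ z in Ω, (‖u (x - ε • z)‖₊ : ℝ≥0∞) ^ 2) := by
    filter_upwards [hcur] with x hx
    have hLHS : ENNReal.ofReal (‖Φ (ε⁻¹ • x) • steklov Ω ε u x‖ ^ 2)
        = (‖Φ (ε⁻¹ • x)‖₊ : ℝ≥0∞) ^ 2 * ENNReal.ofReal (‖steklov Ω ε u x‖ ^ 2) := by
      rw [norm_smul, mul_pow, ENNReal.ofReal_mul (by positivity),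
        ENNReal.ofReal_pow (norm_nonneg _), ofReal_norm, enorm_eq_nnnorm]
    rw [hLHS]
    refine mul_le_mul_right ?_ _
    set Bx := ∫⁻ z in Ω, (‖u (x - ε • z)‖₊ : ℝ≥0∞) ^ 2 with hBdef
    have hCS := cs_sq (volume.restrict Ω) _ hx
    rw [Measure.restrict_apply_univ] at hCS
    by_cases hB : Bx = ⊤
    · rw [hB, ENNReal.mul_top (by simpa [ENNReal.inv_eq_zero] using hvoltop)]
      exact le_top
    set A := ∫⁻ z in Ω, (‖u (x - ε • z)‖₊ : ℝ≥0∞) with hAdef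
    have hA_ne : A ≠ ⊤ := by
      intro h
      have : (⊤ : ℝ≥0∞) ≤ volume Ω * Bx := by
        simpa [h, ENNReal.top_pow] using hCS
      exact (ENNReal.mul_ne_top hvoltop hB) (top_le_iff.mp this)
    have hnorm : ‖steklov Ω ε u x‖ ≤ ((volume Ω).toReal)⁻¹ * A.toReal := by
      rw [steklov, norm_smul, Real.norm_eq_abs,
        abs_of_nonneg (inv_nonneg.2 ENNReal.toReal_nonneg)]
      refine mul_le_mul_of_nonneg_left ?_ (inv_nonneg.2 ENNReal.toReal_nonneg)
      refine (norm_integral_le_lintegral_norm _).trans (le_of_eq ?_)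
      congr 1
      exact lintegral_congr fun z => (ofReal_norm _).trans (enorm_eq_nnnorm _)
    calc ENNReal.ofReal (‖steklov Ω ε u x‖ ^ 2)
        ≤ ENNReal.ofReal ((((volume Ω).toReal)⁻¹ * A.toReal) ^ 2) :=
          ENNReal.ofReal_le_ofReal (pow_le_pow_left₀ (norm_nonneg _) hnorm 2)
      _ = ((volume Ω)⁻¹ * A) ^ 2 := by
          rw [← ENNReal.toReal_inv, ← ENNReal.toReal_mul, ← ENNReal.toReal_pow,
            ENNReal.ofReal_toReal]
          exact ENNReal.pow_ne_top (ENNReal.mul_ne_top hμinv_ne hA_ne)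
      _ = (volume Ω)⁻¹ ^ 2 * A ^ 2 := mul_pow _ _ _
      _ ≤ (volume Ω)⁻¹ ^ 2 * (volume Ω * Bx) := mul_le_mul_right hCS _
      _ = (volume Ω)⁻¹ * Bx := by
          rw [pow_two, mul_assoc, ← mul_assoc (volume Ω)⁻¹ (volume Ω) Bx,
            ENNReal.inv_mul_cancel hvol0 hvoltop, one_mul]
  -- quasi-measure-preserving projection
  have hqfst : Measure.QuasiMeasurePreserving
      (Prod.fst : EuclideanSpace ℝ (Fin d) × EuclideanSpace ℝ (Fin d) → _)
      (volume.prod (volume.restrict Ω)) volume :=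
    ⟨measurable_fst, by rw [Measure.map_fst_prod]; exact Measure.smul_absolutelyContinuous⟩
  have h_ae1 : AEMeasurable
      (Function.uncurry fun x z : EuclideanSpace ℝ (Fin d) =>
        (‖Φ (ε⁻¹ • x)‖₊ : ℝ≥0∞) ^ 2 * (‖u (x - ε • z)‖₊ : ℝ≥0∞) ^ 2)
      (volume.prod (volume.restrict Ω)) :=
    ((hGmeas.comp (measurable_const_smul ε⁻¹)).comp measurable_fst).aemeasurable.mul
      (hUae.comp_quasiMeasurePreserving hqT)
  have h_ae2 : AEMeasurable
      (Function.uncurry fun x z : EuclideanSpace ℝ (Fin d) =>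
        (‖Φ (ε⁻¹ • x + z)‖₊ : ℝ≥0∞) ^ 2 * (‖u x‖₊ : ℝ≥0∞) ^ 2)
      (volume.prod (volume.restrict Ω)) :=
    (hGmeas.comp ((measurable_fst.const_smul ε⁻¹).add measurable_snd)).aemeasurable.mul
      (hUae.comp_quasiMeasurePreserving hqfst)
  -- the main lintegral bound
  have hmain : ∫⁻ x, ENNReal.ofReal (‖Φ (ε⁻¹ • x) • steklov Ω ε u x‖ ^ 2)
      ≤ (volume Ω)⁻¹ * (IΦ * IU) := by
    calc ∫⁻ x, ENNReal.ofReal (‖Φ (ε⁻¹ • x) • steklov Ω ε u x‖ ^ 2)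
        ≤ ∫⁻ x, (‖Φ (ε⁻¹ • x)‖₊ : ℝ≥0∞) ^ 2 *
            ((volume Ω)⁻¹ * ∫⁻ z in Ω, (‖u (x - ε • z)‖₊ : ℝ≥0∞) ^ 2) :=
          lintegral_mono_ae hpt
      _ = (volume Ω)⁻¹ * ∫⁻ x, (‖Φ (ε⁻¹ • x)‖₊ : ℝ≥0∞) ^ 2 *
            ∫⁻ z in Ω, (‖u (x - ε • z)‖₊ : ℝ≥0∞) ^ 2 := by
          rw [← lintegral_const_mul' _ _ hμinv_ne]
          exact lintegral_congr fun x => mul_left_comm _ _ _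
      _ = (volume Ω)⁻¹ * ∫⁻ x, ∫⁻ z in Ω,
            (‖Φ (ε⁻¹ • x)‖₊ : ℝ≥0∞) ^ 2 * (‖u (x - ε • z)‖₊ : ℝ≥0∞) ^ 2 := by
          congr 1
          refine lintegral_congr fun x => ?_
          exact (lintegral_const_mul' _ _ (ENNReal.pow_ne_top ENNReal.coe_ne_top)).symm
      _ = (volume Ω)⁻¹ * ∫⁻ z in Ω, ∫⁻ x,
            (‖Φ (ε⁻¹ • x)‖₊ : ℝ≥0∞) ^ 2 * (‖u (x - ε • z)‖₊ : ℝ≥0∞) ^ 2 := by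
          rw [lintegral_lintegral_swap h_ae1]
      _ = (volume Ω)⁻¹ * ∫⁻ z in Ω, ∫⁻ x,
            (‖Φ (ε⁻¹ • x + z)‖₊ : ℝ≥0∞) ^ 2 * (‖u x‖₊ : ℝ≥0∞) ^ 2 := by
          congr 1
          refine lintegral_congr fun z => ?_
          have ht := lintegral_add_right_eq_self (μ := (volume : Measure (EuclideanSpace ℝ (Fin d))))
            (fun w : EuclideanSpace ℝ (Fin d) =>
              (‖Φ (ε⁻¹ • w)‖₊ : ℝ≥0∞) ^ 2 * (‖u (w - ε • z)‖₊ : ℝ≥0∞) ^ 2) (ε • z)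
          refine ht.symm.trans (lintegral_congr fun x => ?_)
          have h1 : ε⁻¹ • (x + ε • z) = ε⁻¹ • x + z := by
            rw [smul_add, smul_smul, inv_mul_cancel₀ hε.ne', one_smul]
          have h2 : x + ε • z - ε • z = x := add_sub_cancel_right x (ε • z)
          show (‖Φ (ε⁻¹ • (x + ε • z))‖₊ : ℝ≥0∞) ^ 2 * (‖u (x + ε • z - ε • z)‖₊ : ℝ≥0∞) ^ 2
            = (‖Φ (ε⁻¹ • x + z)‖₊ : ℝ≥0∞) ^ 2 * (‖u x‖₊ : ℝ≥0∞) ^ 2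
          rw [h1, h2]
      _ = (volume Ω)⁻¹ * ∫⁻ x, ∫⁻ z in Ω,
            (‖Φ (ε⁻¹ • x + z)‖₊ : ℝ≥0∞) ^ 2 * (‖u x‖₊ : ℝ≥0∞) ^ 2 := by
          rw [lintegral_lintegral_swap h_ae2]
      _ = (volume Ω)⁻¹ * ∫⁻ x, IΦ * (‖u x‖₊ : ℝ≥0∞) ^ 2 := by
          congr 1
          refine lintegral_congr fun x => ?_
          rw [lintegral_mul_const' _ _ (ENNReal.pow_ne_top ENNReal.coe_ne_top)]
          have hper : ∫⁻ z in Ω, (‖Φ (ε⁻¹ • x + z)‖₊ : ℝ≥0∞) ^ 2 = IΦ :=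
            periodic_setLIntegral hfund (fun w => (‖Φ w‖₊ : ℝ≥0∞) ^ 2)
              (fun γ hγ w => by
              show ((‖Φ (w + γ)‖₊ : ℝ≥0∞)) ^ 2 = ((‖Φ w‖₊ : ℝ≥0∞)) ^ 2
              rw [hΦper γ hγ w]) (ε⁻¹ • x)
          rw [hper]
      _ = (volume Ω)⁻¹ * (IΦ * IU) := by
          rw [lintegral_const_mul' _ _ hIΦ_ne]
  -- converting to real integrals
  have hΦint : ∫ x in Ω, ‖Φ x‖ ^ 2 = IΦ.toReal := by
    rw [integral_eq_lintegral_of_nonneg_ae (ae_of_all _ fun x => by positivity)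
      hΦL2.1]
    congr 1
    refine lintegral_congr fun x => ?_
    rw [ENNReal.ofReal_pow (norm_nonneg _), ofReal_norm, enorm_eq_nnnorm]
  have huint : ∫ x, ‖u x‖ ^ 2 = IU.toReal := by
    rw [integral_eq_lintegral_of_nonneg_ae (ae_of_all _ fun x => by positivity)
      hu2.1]
    congr 1
    refine lintegral_congr fun x => ?_
    rw [ENNReal.ofReal_pow (norm_nonneg _), ofReal_norm, enorm_eq_nnnorm]
  rw [hΦint, huint]
  by_cases hint : Integrable (fun x => ‖Φ (ε⁻¹ • x) • steklov Ω ε u x‖ ^ 2) volume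
  · rw [integral_eq_lintegral_of_nonneg_ae (ae_of_all _ fun x => by positivity)
      hint.1]
    have hR_ne : (volume Ω)⁻¹ * (IΦ * IU) ≠ ⊤ :=
      ENNReal.mul_ne_top hμinv_ne (ENNReal.mul_ne_top hIΦ_ne hIU_ne)
    have h1 : (∫⁻ x, ENNReal.ofReal (‖Φ (ε⁻¹ • x) • steklov Ω ε u x‖ ^ 2)).toReal
        ≤ ((volume Ω)⁻¹ * (IΦ * IU)).toReal := ENNReal.toReal_mono hR_ne hmain
    refine (Real.sqrt_le_sqrt h1).trans (le_of_eq ?_)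
    rw [ENNReal.toReal_mul, ENNReal.toReal_mul, ENNReal.toReal_inv,
      Real.sqrt_mul (by positivity), Real.sqrt_mul (by positivity),
      Real.sqrt_inv, mul_assoc]
  · rw [integral_undef hint, Real.sqrt_zero]
    positivity
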